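/- The fractional integration operational matrix entry formula: for $\alpha > 0$ and $i \ge 1$, the quantity $\eta_i = 4[(i-1)^{\alpha+1}(i+1+\alpha) - (i+1)^{\alpha+1}(i-1-\alpha)]$ is positive for all integers $i \ge 1$ when $0 < \alpha < 1$. -/
import Mathlib

open Real Set

/-- Second-order strict Bernoulli: for `1 < r < 2` and `0 ≤ t < 1`,
`1 + r(t-1) + r(r-1)/2 (t-1)^2 < t ^ r`. -/
lemma key_bernoulli2 (r t : ℝ) (hr1 : 1 < r) (hr2 : r < 2) (ht0 : 0 ≤ t) (ht1 : t < 1) :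
    1 + r * (t - 1) + r * (r - 1) / 2 * (t - 1) ^ 2 < t ^ r := by
  set h : ℝ → ℝ := fun x => x ^ r - (1 + r * (x - 1) + r * (r - 1) / 2 * (x - 1) ^ 2) with hh
  have hr0 : (0:ℝ) < r := by linarith
  -- derivative of h on (0,1) is negative
  have hderiv : ∀ x ∈ Ioo (0:ℝ) 1, HasDerivAt h (r * x ^ (r - 1) - (r + r * (r - 1) * (x - 1))) x := by
    intro x hx
    have h1 : HasDerivAt (fun x : ℝ => x ^ r) (r * x ^ (r - 1)) x := by
      simpa [mul_comm] using Real.hasDerivAt_rpow_const (p := r) (Or.inl hx.1.ne')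
    have h2 : HasDerivAt (fun x : ℝ => 1 + r * (x - 1) + r * (r - 1) / 2 * (x - 1) ^ 2)
        (r + r * (r - 1) * (x - 1)) x := by
      have : HasDerivAt (fun x : ℝ => 1 + r * (x - 1) + r * (r - 1) / 2 * (x - 1) ^ 2)
          (0 + r * 1 + r * (r - 1) / 2 * (2 * (x - 1) ^ 1 * 1)) x := by
        exact (((hasDerivAt_const x (1:ℝ)).add ((hasDerivAt_id x).sub_const 1 |>.const_mul r)).add
          (((hasDerivAt_id x).sub_const 1 |>.pow 2).const_mul (r * (r - 1) / 2)))
      convert this using 1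
      ring
    exact h1.sub h2
  have hderivneg : ∀ x ∈ Ioo (0:ℝ) 1, r * x ^ (r - 1) - (r + r * (r - 1) * (x - 1)) < 0 := by
    intro x hx
    have hb : x ^ (r - 1) < 1 + (r - 1) * (x - 1) := by
      have := rpow_one_add_lt_one_add_mul_self (s := x - 1)
        (by linarith [hx.1]) (sub_ne_zero.mpr hx.2.ne)
        (p := r - 1) (by linarith) (by linarith)
      simpa using this
    nlinarith [hx.1, hx.2]
  have hcont : ContinuousOn h (Icc (0:ℝ) 1) := by
    apply ContinuousOn.sub
    · exact fun x hx => (Real.continuousAt_rpow_const x r (Or.inr hr0.le)).continuousWithinAt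
    · fun_prop
  have hanti : StrictAntiOn h (Icc (0:ℝ) 1) := by
    apply strictAntiOn_of_deriv_neg (convex_Icc 0 1) hcont
    intro x hx
    rw [interior_Icc] at hx
    rw [(hderiv x hx).deriv]
    exact hderivneg x hx
  have h1 : h 1 = 0 := by simp [hh, Real.one_rpow]
  have := hanti ⟨ht0, ht1.le⟩ ⟨zero_le_one, le_refl 1⟩ ht1
  rw [h1] at this
  simp only [hh] at this
  linarith

theorem stmt15 (α : ℝ) (hα0 : 0 < α) (hα1 : α < 1) (i : ℕ) (hi : 1 ≤ i) :
    0 < 4 * (((i : ℝ) - 1) ^ (α + 1) * ((i : ℝ) + 1 + α)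
        - ((i : ℝ) + 1) ^ (α + 1) * ((i : ℝ) - 1 - α)) := by
  have hi1 : (1:ℝ) ≤ (i:ℝ) := by exact_mod_cast hi
  set a : ℝ := (i:ℝ) - 1 with ha
  set b : ℝ := (i:ℝ) + 1 with hb
  have ha0 : 0 ≤ a := by simp [ha]; linarith
  have hb2 : (2:ℝ) ≤ b := by simp [hb]; linarith
  have hb0 : (0:ℝ) < b := by linarith
  set r : ℝ := α + 1 with hrdef
  set t : ℝ := a / b with htdef
  have ht0 : 0 ≤ t := div_nonneg ha0 hb0.le
  have ht1 : t < 1 := (div_lt_one hb0).mpr (by simp [ha, hb]; linarith)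
  have hkey := key_bernoulli2 r t (by simp [hrdef]; linarith) (by simp [hrdef]; linarith) ht0 ht1
  have hbr : (0:ℝ) < b ^ r := Real.rpow_pos_of_pos hb0 r
  have hab : a ^ r = t ^ r * b ^ r := by
    rw [htdef, Real.div_rpow ha0 hb0.le]
    field_simp
  have hba : b + α > 0 := by linarith
  -- multiply key inequality by (b + α) * b ^ r
  have hmul : (1 + r * (t - 1) + r * (r - 1) / 2 * (t - 1) ^ 2) * ((b + α) * b ^ r)
      < t ^ r * ((b + α) * b ^ r) :=
    mul_lt_mul_of_pos_right hkey (by positivity)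
  have htr : t ^ r * ((b + α) * b ^ r) = a ^ r * (b + α) := by rw [hab]; ring
  -- algebraic identity: Q * (b + α) = (a - α) + 2 r α² / b²
  have hident : (1 + r * (t - 1) + r * (r - 1) / 2 * (t - 1) ^ 2) * (b + α)
      = (a - α) + 2 * r * α ^ 2 / b ^ 2 := by
    have hbne : b ≠ 0 := hb0.ne'
    have hab2 : a = b - 2 := by simp [ha, hb]; ring
    rw [htdef, hrdef, hab2]
    field_simp
    ring
  have hpos : 0 < 2 * r * α ^ 2 / b ^ 2 * b ^ r := by
    have : (0:ℝ) < r := by simp [hrdef]; linarith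
    positivity
  have hfinal : b ^ r * (a - α) < a ^ r * (b + α) := by
    calc b ^ r * (a - α) < b ^ r * (a - α) + 2 * r * α ^ 2 / b ^ 2 * b ^ r := by linarith
      _ = ((a - α) + 2 * r * α ^ 2 / b ^ 2) * b ^ r := by ring
      _ = (1 + r * (t - 1) + r * (r - 1) / 2 * (t - 1) ^ 2) * (b + α) * b ^ r := by rw [hident]
      _ = (1 + r * (t - 1) + r * (r - 1) / 2 * (t - 1) ^ 2) * ((b + α) * b ^ r) := by ring
      _ < t ^ r * ((b + α) * b ^ r) := hmul
      _ = a ^ r * (b + α) := htr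
  linarith
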